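/- arXiv:1206.3218 — 2 statements merged into one kernel-verified Lean document; each statement's English description precedes it below -/
import Mathlib

section
/- Let w be an admissible sequence with w ∈ ℓ_r for some 1 < r < ∞, and let r* be the conjugate exponent of r. Then the canonical inclusion ℓ_{r*} ↪ d(w,1) is a bounded linear operator, and consequently the canonical inclusions d^*(w,1) ↪ ℓ_r and d_*(w,1) ↪ ℓ_r are bounded linear operators. -/
noncomputable section

open NormedSpace Filter Topology Metric

/-- The dual (transpose) of a continuous linear operator between normed spaces. -/
def dualOp (𝕜 : Type*) [RCLike 𝕜] {E F : Type*} [NormedAddCommGroup E] [NormedSpace 𝕜 E]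
    [NormedAddCommGroup F] [NormedSpace 𝕜 F] (T : E →L[𝕜] F) :
    StrongDual 𝕜 F →L[𝕜] StrongDual 𝕜 E :=
  (ContinuousLinearMap.compL 𝕜 E F 𝕜).flip T

/-- The canonical (Arens) extension of a continuous multilinear map `Φ : X × ⋯ × X → W`
to the bidual, evaluated at a point `xs` of the `N`-fold product of the bidual of `X`,
with values in the bidual of `W`.  It is obtained by extending one variable at a time,
the first variable being extended last (which corresponds to the iterated weak-star
limit `lim_{α₁} … lim_{α_N}`).  It is bundled as a continuous linear map in `Φ`. -/
def arens (𝕜 : Type*) [RCLike 𝕜] (X W : Type*) [NormedAddCommGroup X] [NormedSpace 𝕜 X]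
    [NormedAddCommGroup W] [NormedSpace 𝕜 W] :
    ∀ {N : ℕ}, (Fin N → StrongDual 𝕜 (StrongDual 𝕜 X)) →
      (ContinuousMultilinearMap 𝕜 (fun _ : Fin N => X) W →L[𝕜]
        StrongDual 𝕜 (StrongDual 𝕜 W))
  | 0, _ =>
      (NormedSpace.inclusionInDoubleDual 𝕜 W).comp
        ((continuousMultilinearCurryFin0 𝕜 X W).toContinuousLinearEquiv :
          ContinuousMultilinearMap 𝕜 (fun _ : Fin 0 => X) W ≃L[𝕜] W).toContinuousLinearMap
  | (N + 1), xs =>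
      ((ContinuousLinearMap.compL 𝕜 (StrongDual 𝕜 W) (StrongDual 𝕜 X) 𝕜 (xs 0)).comp
        ((ContinuousLinearMap.flipₗᵢ 𝕜 X (StrongDual 𝕜 W) 𝕜).toContinuousLinearEquiv.toContinuousLinearMap.comp
          ((ContinuousLinearMap.compL 𝕜 X
              (ContinuousMultilinearMap 𝕜 (fun _ : Fin N => X) W)
              (StrongDual 𝕜 (StrongDual 𝕜 W)) (arens 𝕜 X W (Fin.tail xs))).comp
            ((continuousMultilinearCurryLeftEquiv 𝕜 (fun _ : Fin (N + 1) => X)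
                W).toContinuousLinearEquiv :
              ContinuousMultilinearMap 𝕜 (fun _ : Fin (N + 1) => X) W ≃L[𝕜]
                (X →L[𝕜] ContinuousMultilinearMap 𝕜 (fun _ : Fin N => X) W)).toContinuousLinearMap)))

end

section Core2

open NormedSpace Filter Topology Metric

variable (𝕜 : Type*) [RCLike 𝕜] {X W : Type*} [NormedAddCommGroup X] [NormedSpace 𝕜 X]
  [NormedAddCommGroup W] [NormedSpace 𝕜 W] {N : ℕ}

/-- The norm of the `N`-homogeneous polynomial associated to a continuous multilinear map,
i.e. the supremum of `‖Φ (x, …, x)‖` over the closed unit ball. -/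
noncomputable def polyNorm (Φ : ContinuousMultilinearMap 𝕜 (fun _ : Fin N => X) W) : ℝ :=
  ⨆ x : Metric.closedBall (0 : X) 1, ‖Φ (fun _ => (x : X))‖

/-- A multilinear map is symmetric if it is invariant under permutation of its arguments. -/
def IsSymmetricMap (Φ : ContinuousMultilinearMap 𝕜 (fun _ : Fin N => X) W) : Prop :=
  ∀ (σ : Equiv.Perm (Fin N)) (m : Fin N → X), Φ (fun i => m (σ i)) = Φ m

/-- The polynomial associated to `Φ` attains its norm on the closed unit ball. -/
def PolyNormAttaining (Φ : ContinuousMultilinearMap 𝕜 (fun _ : Fin N => X) W) : Prop :=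
  ∃ a : X, ‖a‖ ≤ 1 ∧ ‖Φ (fun _ => a)‖ = polyNorm 𝕜 Φ

/-- The Aron–Berner extension of the polynomial associated to `Φ` attains its norm on the
closed unit ball of the bidual.  (Recall that the Aron–Berner extension has the same norm
as the polynomial itself.) -/
def ABNormAttaining (Φ : ContinuousMultilinearMap 𝕜 (fun _ : Fin N => X) W) : Prop :=
  ∃ a'' : StrongDual 𝕜 (StrongDual 𝕜 X), ‖a''‖ ≤ 1 ∧
    ‖arens 𝕜 X W (fun _ => a'') Φ‖ = polyNorm 𝕜 Φ

/-- A normed space `E` has the approximation property if the identity map can be approximated,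
uniformly on compact sets, by continuous finite-rank operators. -/
def HasApproximationProperty (E : Type*) [NormedAddCommGroup E] [NormedSpace 𝕜 E] : Prop :=
  ∀ K : Set E, IsCompact K → ∀ ε : ℝ, 0 < ε →
    ∃ T : E →L[𝕜] E, FiniteDimensional 𝕜 (LinearMap.range (T : E →ₗ[𝕜] E)) ∧
      ∀ x ∈ K, ‖T x - x‖ ≤ ε

end Core2

section Lorentz

open Filter Topology

variable {𝕜 : Type*} [RCLike 𝕜]

/-- `decRearr x n` is the `(n+1)`-th largest value of the sequence `(‖x i‖)_i`, i.e. the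
decreasing rearrangement `x*` of `x` (indexed from `0`). -/
noncomputable def decRearr (x : ℕ → 𝕜) (n : ℕ) : ℝ :=
  sInf {r : ℝ | 0 ≤ r ∧ {i : ℕ | r < ‖x i‖}.Finite ∧ {i : ℕ | r < ‖x i‖}.ncard ≤ n}

/-- `lorentzW w n = W(n) = w_1 + ⋯ + w_n` (with `w` indexed from `0`). -/
def lorentzW (w : ℕ → ℝ) (n : ℕ) : ℝ := ∑ i ∈ Finset.range n, w i

/-- The quotient `(x*(1) + ⋯ + x*(n+1)) / W(n+1)`. -/
noncomputable def lorentzRatio (w : ℕ → ℝ) (x : ℕ → 𝕜) (n : ℕ) : ℝ :=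
  (∑ i ∈ Finset.range (n + 1), decRearr x i) / lorentzW w (n + 1)

/-- The norm `‖x‖_W = sup_n (x*(1) + ⋯ + x*(n)) / W(n)` of `d^*(w,1)`. -/
noncomputable def lorentzDualNorm (w : ℕ → ℝ) (x : ℕ → 𝕜) : ℝ :=
  ⨆ n, lorentzRatio w x n

/-- The norm `‖x‖_{w,1} = Σ_i x*(i) w_i` of the Lorentz sequence space `d(w,1)`. -/
noncomputable def lorentzSumNorm (w : ℕ → ℝ) (x : ℕ → 𝕜) : ℝ :=
  ∑' i, decRearr x i * w i

/-- An admissible sequence: a decreasing sequence of nonnegative reals with `w 0 = 1`,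
tending to `0`, whose series diverges. -/
def IsAdmissible (w : ℕ → ℝ) : Prop :=
  w 0 = 1 ∧ (∀ n, 0 ≤ w n) ∧ Antitone w ∧ Tendsto w atTop (𝓝 0) ∧ ¬ Summable w

/-- Membership in `d^*(w,1)`: bounded sequences with `‖x‖_W < ∞`. -/
def MemLorentzDual (w : ℕ → ℝ) (x : ℕ → 𝕜) : Prop :=
  BddAbove (Set.range fun i => ‖x i‖) ∧ BddAbove (Set.range (lorentzRatio w x))

/-- Membership in the predual `d_*(w,1)`: bounded sequences with
`(x*(1) + ⋯ + x*(n)) / W(n) → 0`. -/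
def MemLorentzPredual (w : ℕ → ℝ) (x : ℕ → 𝕜) : Prop :=
  BddAbove (Set.range fun i => ‖x i‖) ∧ Tendsto (lorentzRatio w x) atTop (𝓝 0)

/-- Membership in the Lorentz sequence space `d(w,1)`. -/
def MemLorentzSpace (w : ℕ → ℝ) (x : ℕ → 𝕜) : Prop :=
  BddAbove (Set.range fun i => ‖x i‖) ∧ Summable fun i => decRearr x i * w i

variable (𝕜)

/-- `E` (with the linear coordinate embedding `toSeq`) is a realization of the predual
`d_*(w,1)` of the Lorentz sequence space `d(w,1)`. -/
structure IsLorentzPredual (w : ℕ → ℝ) (E : Type*) [NormedAddCommGroup E] [NormedSpace 𝕜 E]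
    (toSeq : E →ₗ[𝕜] (ℕ → 𝕜)) : Prop where
  inj : Function.Injective toSeq
  mem_range : ∀ x : ℕ → 𝕜, (∃ e, toSeq e = x) ↔ MemLorentzPredual w x
  norm_eq : ∀ e, ‖e‖ = lorentzDualNorm w (toSeq e)

/-- `E` (with the linear coordinate embedding `toSeq`) is a realization of the dual
`d^*(w,1)` of the Lorentz sequence space `d(w,1)`. -/
structure IsLorentzDual (w : ℕ → ℝ) (E : Type*) [NormedAddCommGroup E] [NormedSpace 𝕜 E]
    (toSeq : E →ₗ[𝕜] (ℕ → 𝕜)) : Prop where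
  inj : Function.Injective toSeq
  mem_range : ∀ x : ℕ → 𝕜, (∃ e, toSeq e = x) ↔ MemLorentzDual w x
  norm_eq : ∀ e, ‖e‖ = lorentzDualNorm w (toSeq e)

/-- `E` (with the linear coordinate embedding `toSeq`) is a realization of the Lorentz
sequence space `d(w,1)`. -/
structure IsLorentzSpace (w : ℕ → ℝ) (E : Type*) [NormedAddCommGroup E] [NormedSpace 𝕜 E]
    (toSeq : E →ₗ[𝕜] (ℕ → 𝕜)) : Prop where
  inj : Function.Injective toSeq
  mem_range : ∀ x : ℕ → 𝕜, (∃ e, toSeq e = x) ↔ MemLorentzSpace w x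
  norm_eq : ∀ e, ‖e‖ = lorentzSumNorm w (toSeq e)

end Lorentz

open Filter Topology
section DecRearrAux

variable {𝕜 : Type*} [RCLike 𝕜]

/-- The defining set of `decRearr`. -/
def decSet (x : ℕ → 𝕜) (n : ℕ) : Set ℝ :=
  {r : ℝ | 0 ≤ r ∧ {i : ℕ | r < ‖x i‖}.Finite ∧ {i : ℕ | r < ‖x i‖}.ncard ≤ n}

lemma decRearr_eq_sInf (x : ℕ → 𝕜) (n : ℕ) : decRearr x n = sInf (decSet x n) := rfl

lemma decSet_bddBelow (x : ℕ → 𝕜) (n : ℕ) : BddBelow (decSet x n) :=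
  ⟨0, fun _ hr => hr.1⟩

lemma decSet_nonempty {x : ℕ → 𝕜} (hx : BddAbove (Set.range fun i => ‖x i‖)) (n : ℕ) :
    (decSet x n).Nonempty := by
  obtain ⟨M, hM⟩ := hx
  have hemp : {i : ℕ | M < ‖x i‖} = ∅ := by
    ext i
    simp only [Set.mem_setOf_eq, Set.mem_empty_iff_false, iff_false, not_lt]
    exact hM ⟨i, rfl⟩
  exact ⟨M, le_trans (norm_nonneg (x 0)) (hM ⟨0, rfl⟩), by simp [hemp]⟩

lemma decRearr_nonneg (x : ℕ → 𝕜) (n : ℕ) : 0 ≤ decRearr x n :=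
  Real.sInf_nonneg fun _ hr => hr.1

lemma le_decRearr_of_finset {x : ℕ → 𝕜} (hx : BddAbove (Set.range fun i => ‖x i‖))
    {t : ℝ} {n : ℕ} (S : Finset ℕ) (hS : ∀ i ∈ S, t ≤ ‖x i‖) (hcard : n + 1 ≤ S.card) :
    t ≤ decRearr x n := by
  rcases le_or_gt t 0 with h | h
  · exact h.trans (decRearr_nonneg x n)
  refine le_csInf (decSet_nonempty hx n) ?_
  rintro r ⟨hr0, hfin, hcard'⟩
  by_contra hlt
  push_neg at hlt
  have hsub : (S : Set ℕ) ⊆ {i | r < ‖x i‖} := fun i hi => lt_of_lt_of_le hlt (hS i hi)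
  have := Set.ncard_le_ncard hsub hfin
  rw [Set.ncard_coe_finset] at this
  omega

lemma norm_le_decRearr_zero {x : ℕ → 𝕜} (hx : BddAbove (Set.range fun i => ‖x i‖)) (i : ℕ) :
    ‖x i‖ ≤ decRearr x 0 := by
  refine le_csInf (decSet_nonempty hx 0) ?_
  rintro r ⟨hr0, hfin, hcard⟩
  by_contra h
  push_neg at h
  have hmem : i ∈ {j | r < ‖x j‖} := h
  have hz : {j | r < ‖x j‖}.ncard = 0 := Nat.le_zero.mp hcard
  rw [(Set.ncard_eq_zero hfin).mp hz] at hmem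
  exact hmem

lemma decRearr_antitone {x : ℕ → 𝕜} (hx : BddAbove (Set.range fun i => ‖x i‖)) :
    Antitone (decRearr x) :=
  antitone_nat_of_succ_le fun n =>
    csInf_le_csInf (decSet_bddBelow x (n + 1)) (decSet_nonempty hx n)
      fun r hr => ⟨hr.1, hr.2.1, hr.2.2.trans (Nat.le_succ n)⟩

lemma exists_finset_of_lt_decRearr {x : ℕ → 𝕜} {t : ℝ} {n : ℕ} (ht : 0 ≤ t)
    (h : t < decRearr x n) :
    ∃ S : Finset ℕ, S.card = n + 1 ∧ ∀ i ∈ S, t < ‖x i‖ := by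
  have hmem : t ∉ decSet x n := fun hm =>
    absurd (csInf_le (decSet_bddBelow x n) hm) (not_le.2 h)
  by_cases hfin : {i : ℕ | t < ‖x i‖}.Finite
  · have hcard : n + 1 ≤ {i : ℕ | t < ‖x i‖}.ncard := by
      by_contra hc
      push_neg at hc
      exact hmem ⟨ht, hfin, by omega⟩
    obtain ⟨T, hTs, hTc⟩ := Set.exists_subset_card_eq hcard
    have hTfin : T.Finite := hfin.subset hTs
    refine ⟨hTfin.toFinset, ?_, fun i hi => hTs (hTfin.mem_toFinset.mp hi)⟩
    rwa [Set.ncard_eq_toFinset_card _ hTfin] at hTc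
  · obtain ⟨T, hTs, hTc⟩ := Set.Infinite.exists_subset_card_eq hfin (n + 1)
    exact ⟨T, hTc, fun i hi => hTs hi⟩

end DecRearrAux
section RearrIneq

open Finset Filter Topology

variable {𝕜 : Type*} [RCLike 𝕜]

/-- Lemma A: finite sums of `‖x i‖ ^ p` are dominated by sums of `decRearr x n ^ p`. -/
lemma sum_norm_rpow_le_sum_decRearr {x : ℕ → 𝕜} (hx : BddAbove (Set.range fun i => ‖x i‖))
    {p : ℝ} (hp : 0 ≤ p) (F : Finset ℕ) :
    ∑ i ∈ F, ‖x i‖ ^ p ≤ ∑ n ∈ Finset.range F.card, decRearr x n ^ p := by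
  induction F using Finset.strongInduction with
  | _ F ih =>
    rcases F.eq_empty_or_nonempty with rfl | hne
    · simp
    obtain ⟨i0, hi0F, hi0min⟩ := F.exists_min_image (fun i => ‖x i‖) hne
    have hcard1 : 1 ≤ F.card := Finset.card_pos.mpr hne
    have herase : (F.erase i0).card = F.card - 1 := Finset.card_erase_of_mem hi0F
    have key : ‖x i0‖ ≤ decRearr x (F.card - 1) :=
      le_decRearr_of_finset hx F (fun i hi => hi0min i hi) (by omega)
    have h1 : ∑ i ∈ F, ‖x i‖ ^ p = ∑ i ∈ F.erase i0, ‖x i‖ ^ p + ‖x i0‖ ^ p :=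
      (Finset.sum_erase_add _ _ hi0F).symm
    have h2 := ih (F.erase i0) (Finset.erase_ssubset hi0F)
    have h3 : ‖x i0‖ ^ p ≤ decRearr x (F.card - 1) ^ p :=
      Real.rpow_le_rpow (norm_nonneg _) key hp
    have h4 : ∑ n ∈ Finset.range F.card, decRearr x n ^ p
        = ∑ n ∈ Finset.range (F.card - 1), decRearr x n ^ p + decRearr x (F.card - 1) ^ p := by
      conv_lhs => rw [show F.card = (F.card - 1) + 1 by omega]
      rw [Finset.sum_range_succ]
    rw [h1, h4, ← herase]
    exact add_le_add (herase ▸ h2) (herase ▸ h3)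

/-- Lemma B: sums of `decRearr x n ^ p` are dominated by `∑' i, ‖x i‖ ^ p`. -/
lemma sum_decRearr_rpow_le_tsum {x : ℕ → 𝕜} {p : ℝ} (hp : 0 < p)
    (hsum : Summable fun i => ‖x i‖ ^ p) (N : ℕ) :
    ∑ n ∈ Finset.range N, decRearr x n ^ p ≤ ∑' i, ‖x i‖ ^ p := by
  have key : ∀ ε : ℝ, 0 < ε →
      ∑ n ∈ Finset.range N, max (decRearr x n - ε) 0 ^ p ≤ ∑' i, ‖x i‖ ^ p := by
    intro ε hε
    suffices h : ∃ G : Finset ℕ, G.card = N ∧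
        ∑ n ∈ Finset.range N, max (decRearr x n - ε) 0 ^ p ≤ ∑ i ∈ G, ‖x i‖ ^ p by
      obtain ⟨G, _, hG⟩ := h
      exact hG.trans (hsum.sum_le_tsum G (fun i _ => Real.rpow_nonneg (norm_nonneg _) p))
    induction N with
    | zero => exact ⟨∅, rfl, by simp⟩
    | succ N ihN =>
      obtain ⟨G, hGcard, hGsum⟩ := ihN
      have hfresh : ∃ i ∉ G, max (decRearr x N - ε) 0 ^ p ≤ ‖x i‖ ^ p := by
        rcases le_or_gt (decRearr x N) ε with h | h
        · obtain ⟨i, hi⟩ := G.exists_notMem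
          refine ⟨i, hi, ?_⟩
          rw [max_eq_right (by linarith), Real.zero_rpow hp.ne']
          positivity
        · have h0 : (0 : ℝ) ≤ decRearr x N - ε := by linarith
          obtain ⟨S, hScard, hS⟩ := exists_finset_of_lt_decRearr h0 (by linarith)
          have hSG : (S \ G).Nonempty := by
            rw [← Finset.card_pos]
            have := Finset.le_card_sdiff G S
            omega
          obtain ⟨i, hi⟩ := hSG
          refine ⟨i, (Finset.mem_sdiff.mp hi).2, ?_⟩
          rw [max_eq_left h0]
          exact Real.rpow_le_rpow h0 (le_of_lt (hS i (Finset.mem_sdiff.mp hi).1)) hp.le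
      obtain ⟨i, hiG, hile⟩ := hfresh
      refine ⟨insert i G, by rw [Finset.card_insert_of_notMem hiG, hGcard], ?_⟩
      rw [Finset.sum_range_succ, Finset.sum_insert hiG]
      linarith
  have cont : Tendsto (fun ε : ℝ => ∑ n ∈ Finset.range N, max (decRearr x n - ε) 0 ^ p)
      (𝓝[>] (0 : ℝ)) (𝓝 (∑ n ∈ Finset.range N, decRearr x n ^ p)) := by
    have hterm : ∀ n, Tendsto (fun ε : ℝ => max (decRearr x n - ε) 0 ^ p) (𝓝 (0 : ℝ))
        (𝓝 (decRearr x n ^ p)) := by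
      intro n
      have h1 : Tendsto (fun ε : ℝ => max (decRearr x n - ε) 0) (𝓝 (0 : ℝ))
          (𝓝 (max (decRearr x n - 0) 0)) :=
        (tendsto_const_nhds.sub tendsto_id).max tendsto_const_nhds
      rw [sub_zero, max_eq_left (decRearr_nonneg x n)] at h1
      exact (Real.continuousAt_rpow_const _ p (Or.inr hp.le)).tendsto.comp h1
    exact (tendsto_finset_sum _ fun n _ => hterm n).mono_left nhdsWithin_le_nhds
  exact le_of_tendsto cont (Filter.eventually_of_mem self_mem_nhdsWithin fun ε hε => key ε hε)

/-- Abel summation bound. -/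
lemma abel_sum_le {b d v : ℕ → ℝ} {C : ℝ} (hb : Antitone b) (hb0 : ∀ n, 0 ≤ b n)
    (h : ∀ m : ℕ, ∑ k ∈ Finset.range (m + 1), d k ≤ C * ∑ k ∈ Finset.range (m + 1), v k)
    (N : ℕ) :
    ∑ n ∈ Finset.range N, b n * d n ≤ C * ∑ n ∈ Finset.range N, b n * v n := by
  rcases Nat.eq_zero_or_pos N with rfl | hN
  · simp
  have habel : ∀ g : ℕ → ℝ, ∑ n ∈ Finset.range N, b n * g n
      = b (N - 1) * (∑ k ∈ Finset.range N, g k)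
        + ∑ i ∈ Finset.range (N - 1), (b i - b (i + 1)) * (∑ k ∈ Finset.range (i + 1), g k) := by
    intro g
    have := Finset.sum_range_by_parts (f := b) (g := g) N
    simp only [smul_eq_mul] at this
    rw [this, sub_eq_add_neg, ← Finset.sum_neg_distrib]
    congr 1
    apply Finset.sum_congr rfl
    intros; ring
  have hA : b (N - 1) * (∑ k ∈ Finset.range N, d k)
      ≤ b (N - 1) * (C * ∑ k ∈ Finset.range N, v k) := by
    refine mul_le_mul_of_nonneg_left ?_ (hb0 (N - 1))
    have := h (N - 1)
    rwa [show N - 1 + 1 = N by omega] at this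
  have hB : ∑ i ∈ Finset.range (N - 1), (b i - b (i + 1)) * (∑ k ∈ Finset.range (i + 1), d k)
      ≤ ∑ i ∈ Finset.range (N - 1), (b i - b (i + 1)) * (C * ∑ k ∈ Finset.range (i + 1), v k) :=
    Finset.sum_le_sum fun i _ =>
      mul_le_mul_of_nonneg_left (h i) (sub_nonneg.mpr (hb (Nat.le_succ i)))
  have hiden : C * (b (N - 1) * (∑ k ∈ Finset.range N, v k)
        + ∑ i ∈ Finset.range (N - 1), (b i - b (i + 1)) * (∑ k ∈ Finset.range (i + 1), v k))
      = b (N - 1) * (C * ∑ k ∈ Finset.range N, v k)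
        + ∑ i ∈ Finset.range (N - 1), (b i - b (i + 1))
            * (C * ∑ k ∈ Finset.range (i + 1), v k) := by
    rw [mul_add]
    congr 1
    · ring
    · rw [Finset.mul_sum]
      exact Finset.sum_congr rfl fun i _ => by ring
  rw [habel d, habel v, hiden]
  exact add_le_add hA hB

end RearrIneq
section LorentzBounds

open Finset Filter Topology

variable {𝕜 : Type*} [RCLike 𝕜]

lemma rpow_split {a : ℝ} (ha : 0 ≤ a) {r : ℝ} (hr : 0 < r) : a ^ r = a ^ (r - 1) * a := by
  rcases eq_or_lt_of_le ha with h | h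
  · rw [← h, Real.zero_rpow hr.ne', mul_zero]
  · have h1 : a ^ (r - 1 + 1) = a ^ (r - 1) * a ^ (1 : ℝ) := Real.rpow_add h (r - 1) 1
    rw [Real.rpow_one] at h1
    rw [← h1, sub_add_cancel]

lemma sum_decRearr_rpow_le_of_ratio_bdd {w : ℕ → ℝ} (hw : IsAdmissible w)
    {r s : ℝ} (hrs : Real.HolderConjugate r s) (hwr : Summable fun i => w i ^ r)
    {x : ℕ → 𝕜} (hx : BddAbove (Set.range fun i => ‖x i‖))
    {C : ℝ} (hC0 : 0 ≤ C) (hC : ∀ n, lorentzRatio w x n ≤ C) (N : ℕ) :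
    ∑ n ∈ Finset.range N, decRearr x n ^ r ≤ (C * (∑' i, w i ^ r) ^ (1 / r)) ^ r := by
  have hd0 : ∀ n, 0 ≤ decRearr x n := decRearr_nonneg x
  have hw0 := hw.2.1
  set A := ∑ n ∈ Finset.range N, decRearr x n ^ r with hA
  have hA0 : 0 ≤ A := Finset.sum_nonneg fun n _ => Real.rpow_nonneg (hd0 n) r
  set Wr := (∑' i, w i ^ r) ^ (1 / r) with hWr
  have hWr0 : 0 ≤ Wr := Real.rpow_nonneg (tsum_nonneg fun i => Real.rpow_nonneg (hw0 i) r) _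
  have hpart : ∀ m : ℕ, ∑ k ∈ Finset.range (m + 1), decRearr x k
      ≤ C * ∑ k ∈ Finset.range (m + 1), w k := by
    intro m
    have h1 : (0 : ℝ) < lorentzW w (m + 1) := by
      have : w 0 ≤ lorentzW w (m + 1) :=
        Finset.single_le_sum (f := w) (fun i _ => hw0 i) (Finset.mem_range.mpr (Nat.succ_pos m))
      rw [hw.1] at this; linarith
    have h2 := hC m
    rw [lorentzRatio, div_le_iff₀ h1] at h2
    simpa [lorentzW, mul_comm] using h2
  have hb : Antitone fun n => decRearr x n ^ (r - 1) := fun m n h =>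
    Real.rpow_le_rpow (hd0 n) (decRearr_antitone hx h) (by linarith [hrs.lt])
  have habel := abel_sum_le hb (fun n => Real.rpow_nonneg (hd0 n) _) hpart N
  have hAeq : A = ∑ n ∈ Finset.range N, decRearr x n ^ (r - 1) * decRearr x n :=
    Finset.sum_congr rfl fun n _ => rpow_split (hd0 n) hrs.pos
  have hhold : ∑ n ∈ Finset.range N, decRearr x n ^ (r - 1) * w n
      ≤ (∑ n ∈ Finset.range N, (decRearr x n ^ (r - 1)) ^ s) ^ (1 / s)
        * (∑ n ∈ Finset.range N, w n ^ r) ^ (1 / r) :=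
    Real.inner_le_Lp_mul_Lq_of_nonneg _ hrs.symm
      (fun n _ => Real.rpow_nonneg (hd0 n) _) (fun n _ => hw0 n)
  have h1 : ∑ n ∈ Finset.range N, (decRearr x n ^ (r - 1)) ^ s = A := by
    rw [hA]
    exact Finset.sum_congr rfl fun n _ => by
      rw [← Real.rpow_mul (hd0 n), hrs.sub_one_mul_conj]
  have h2 : (∑ n ∈ Finset.range N, w n ^ r) ^ (1 / r) ≤ Wr :=
    Real.rpow_le_rpow (Finset.sum_nonneg fun n _ => Real.rpow_nonneg (hw0 n) r)
      (hwr.sum_le_tsum _ (fun i _ => Real.rpow_nonneg (hw0 i) r)) (one_div_nonneg.mpr hrs.nonneg)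
  have hmain : A ≤ (C * Wr) * A ^ (1 / s) := by
    calc A = ∑ n ∈ Finset.range N, decRearr x n ^ (r - 1) * decRearr x n := hAeq
      _ ≤ C * ∑ n ∈ Finset.range N, decRearr x n ^ (r - 1) * w n := habel
      _ ≤ C * (A ^ (1 / s) * (∑ n ∈ Finset.range N, w n ^ r) ^ (1 / r)) := by
          refine mul_le_mul_of_nonneg_left ?_ hC0
          rw [← h1]
          exact hhold
      _ ≤ C * (A ^ (1 / s) * Wr) := by
          refine mul_le_mul_of_nonneg_left ?_ hC0
          exact mul_le_mul_of_nonneg_left h2 (Real.rpow_nonneg hA0 _)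
      _ = (C * Wr) * A ^ (1 / s) := by ring
  rcases eq_or_lt_of_le hA0 with h0 | h0
  · rw [← h0]
    exact Real.rpow_nonneg (mul_nonneg hC0 hWr0) r
  · have hAr : A ^ (1 / r) ≤ C * Wr := by
      have hAs : 0 < A ^ (1 / s) := Real.rpow_pos_of_pos h0 _
      have hmul : A ^ (1 / r) * A ^ (1 / s) ≤ (C * Wr) * A ^ (1 / s) := by
        rw [← Real.rpow_add h0,
          show 1 / r + 1 / s = 1 by rw [one_div, one_div]; exact hrs.inv_add_inv_eq_one,
          Real.rpow_one]
        exact hmain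
      exact le_of_mul_le_mul_right hmul hAs
    calc A = (A ^ (1 / r)) ^ r := by
          rw [← Real.rpow_mul h0.le, one_div, inv_mul_cancel₀ hrs.ne_zero, Real.rpow_one]
      _ ≤ (C * Wr) ^ r := Real.rpow_le_rpow (Real.rpow_nonneg h0.le _) hAr hrs.nonneg

lemma memℓp_of_lorentzDual {w : ℕ → ℝ} (hw : IsAdmissible w) {r s : ℝ}
    (hrs : Real.HolderConjugate r s) (hwr : Summable fun i => w i ^ r) {x : ℕ → 𝕜}
    (hxb : BddAbove (Set.range fun i => ‖x i‖))
    (hxr : BddAbove (Set.range (lorentzRatio w x))) :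
    Memℓp x (ENNReal.ofReal r) := by
  apply memℓp_gen
  rw [ENNReal.toReal_ofReal hrs.nonneg]
  set C := sSup (Set.range (lorentzRatio w x)) with hCdef
  have hC : ∀ n, lorentzRatio w x n ≤ C := fun n => le_csSup hxr ⟨n, rfl⟩
  have hC0 : 0 ≤ C := by
    refine le_trans ?_ (hC 0)
    unfold lorentzRatio
    exact div_nonneg (Finset.sum_nonneg fun n _ => decRearr_nonneg x n)
      (Finset.sum_nonneg fun n _ => hw.2.1 n)
  apply summable_of_sum_le (fun i => Real.rpow_nonneg (norm_nonneg _) r)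
  intro F
  exact (sum_norm_rpow_le_sum_decRearr hxb hrs.nonneg F).trans
    (sum_decRearr_rpow_le_of_ratio_bdd hw hrs hwr hxb hC0 hC F.card)

lemma memLorentzSpace_of_memℓp {w : ℕ → ℝ} (hw : IsAdmissible w) {r s : ℝ}
    (hrs : Real.HolderConjugate r s) (hwr : Summable fun i => w i ^ r) {x : ℕ → 𝕜}
    (hx : Memℓp x (ENNReal.ofReal s)) : MemLorentzSpace w x := by
  have hs0 : 0 < s := hrs.symm.pos
  have htr : (ENNReal.ofReal s).toReal = s := ENNReal.toReal_ofReal hs0.le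
  have hsum : Summable fun i => ‖x i‖ ^ s := by
    have := (memℓp_gen_iff (by rw [htr]; exact hs0)).mp hx
    rwa [htr] at this
  have hxb : BddAbove (Set.range fun i => ‖x i‖) :=
    memℓp_infty_iff.mp (hx.of_exponent_ge le_top)
  refine ⟨hxb, ?_⟩
  apply summable_of_sum_range_le
    (fun n => mul_nonneg (decRearr_nonneg x n) (hw.2.1 n))
  intro N
  calc ∑ n ∈ Finset.range N, decRearr x n * w n
      ≤ (∑ n ∈ Finset.range N, decRearr x n ^ s) ^ (1 / s)
        * (∑ n ∈ Finset.range N, w n ^ r) ^ (1 / r) :=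
        Real.inner_le_Lp_mul_Lq_of_nonneg _ hrs.symm
          (fun n _ => decRearr_nonneg x n) (fun n _ => hw.2.1 n)
    _ ≤ (∑' i, ‖x i‖ ^ s) ^ (1 / s) * (∑' i, w i ^ r) ^ (1 / r) := by
        refine mul_le_mul ?_ ?_ ?_ ?_
        · exact Real.rpow_le_rpow
            (Finset.sum_nonneg fun n _ => Real.rpow_nonneg (decRearr_nonneg x n) s)
            (sum_decRearr_rpow_le_tsum hs0 hsum N) (one_div_nonneg.mpr hs0.le)
        · exact Real.rpow_le_rpow
            (Finset.sum_nonneg fun n _ => Real.rpow_nonneg (hw.2.1 n) r)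
            (hwr.sum_le_tsum _ (fun i _ => Real.rpow_nonneg (hw.2.1 i) r))
            (one_div_nonneg.mpr hrs.nonneg)
        · exact Real.rpow_nonneg
            (Finset.sum_nonneg fun n _ => Real.rpow_nonneg (hw.2.1 n) r) _
        · exact Real.rpow_nonneg (tsum_nonneg fun i => Real.rpow_nonneg (norm_nonneg _) s) _

lemma norm_le_lorentzSumNorm {w : ℕ → ℝ} (hw : IsAdmissible w) {x : ℕ → 𝕜}
    (hm : MemLorentzSpace w x) (i : ℕ) : ‖x i‖ ≤ lorentzSumNorm w x :=
  calc ‖x i‖ ≤ decRearr x 0 := norm_le_decRearr_zero hm.1 i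
    _ = decRearr x 0 * w 0 := by rw [hw.1, mul_one]
    _ ≤ ∑' j, decRearr x j * w j :=
        hm.2.le_tsum 0 fun j _ => mul_nonneg (decRearr_nonneg x j) (hw.2.1 j)

lemma norm_le_lorentzDualNorm {w : ℕ → ℝ} (hw : IsAdmissible w) {x : ℕ → 𝕜}
    (hxb : BddAbove (Set.range fun i => ‖x i‖))
    (hxr : BddAbove (Set.range (lorentzRatio w x))) (i : ℕ) :
    ‖x i‖ ≤ lorentzDualNorm w x := by
  have h0 : lorentzRatio w x 0 = decRearr x 0 := by
    simp [lorentzRatio, lorentzW, hw.1]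
  calc ‖x i‖ ≤ decRearr x 0 := norm_le_decRearr_zero hxb i
    _ = lorentzRatio w x 0 := h0.symm
    _ ≤ lorentzDualNorm w x := le_ciSup hxr 0

end LorentzBounds
section Inclusions

open Filter Topology

variable {𝕜 : Type*} [RCLike 𝕜]

lemma continuous_lp_apply {p : ENNReal} [Fact (1 ≤ p)] (hp : p ≠ 0) (i : ℕ) :
    Continuous fun f : lp (fun _ : ℕ => 𝕜) p => f i := by
  have hlip : LipschitzWith 1 fun f : lp (fun _ : ℕ => 𝕜) p => f i := by
    refine LipschitzWith.of_dist_le_mul fun f g => ?_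
    rw [NNReal.coe_one, one_mul, dist_eq_norm, dist_eq_norm]
    have hfg : f i - g i = (f - g) i := by rw [lp.coeFn_sub]; rfl
    rw [hfg]
    exact lp.norm_apply_le_norm hp (f - g) i
  exact hlip.continuous

lemma continuous_coord_of_norm_bound {E : Type*} [NormedAddCommGroup E] [NormedSpace 𝕜 E]
    (toSeq : E →ₗ[𝕜] (ℕ → 𝕜)) (i : ℕ) (h : ∀ e, ‖toSeq e i‖ ≤ ‖e‖) :
    Continuous fun e : E => toSeq e i := by
  have hlip : LipschitzWith 1 fun e : E => toSeq e i := by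
    refine LipschitzWith.of_dist_le_mul fun a b => ?_
    rw [NNReal.coe_one, one_mul, dist_eq_norm, dist_eq_norm]
    have hab : toSeq a i - toSeq b i = toSeq (a - b) i := by rw [map_sub]; rfl
    rw [hab]
    exact h (a - b)
  exact hlip.continuous

lemma exists_inclusion_to_lp {w : ℕ → ℝ} (hw : IsAdmissible w) {r s : ℝ}
    (hrs : Real.HolderConjugate r s) (hwr : Summable fun i => w i ^ r)
    [Fact (1 ≤ ENNReal.ofReal r)]
    {E : Type*} [NormedAddCommGroup E] [NormedSpace 𝕜 E] [CompleteSpace E]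
    (toSeq : E →ₗ[𝕜] (ℕ → 𝕜))
    (hb : ∀ e, BddAbove (Set.range fun i => ‖toSeq e i‖))
    (hratio : ∀ e, BddAbove (Set.range (lorentzRatio w (toSeq e))))
    (hnorm : ∀ e, ‖e‖ = lorentzDualNorm w (toSeq e)) :
    ∃ S : E →L[𝕜] lp (fun _ : ℕ => 𝕜) (ENNReal.ofReal r),
      ∀ e, ((S e : lp (fun _ : ℕ => 𝕜) (ENNReal.ofReal r)) : ∀ _ : ℕ, 𝕜) = toSeq e := by
  have hpr0 : (ENNReal.ofReal r) ≠ 0 :=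
    (lt_of_lt_of_le zero_lt_one (Fact.out : 1 ≤ ENNReal.ofReal r)).ne'
  have hmem : ∀ e : E, Memℓp (toSeq e) (ENNReal.ofReal r) := fun e =>
    memℓp_of_lorentzDual hw hrs hwr (hb e) (hratio e)
  let S0 : E →ₗ[𝕜] lp (fun _ : ℕ => 𝕜) (ENNReal.ofReal r) :=
    { toFun := fun e => ⟨toSeq e, hmem e⟩
      map_add' := fun a b => lp.ext (by rw [lp.coeFn_add]; exact map_add toSeq a b)
      map_smul' := fun c a => lp.ext (by rw [lp.coeFn_smul]; exact map_smul toSeq c a) }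
  have hS0 : ∀ e, ((S0 e : lp (fun _ : ℕ => 𝕜) (ENNReal.ofReal r)) : ∀ _ : ℕ, 𝕜) = toSeq e :=
    fun _ => rfl
  have hcoordE : ∀ i, Continuous fun e : E => toSeq e i := fun i =>
    continuous_coord_of_norm_bound toSeq i fun e => by
      rw [hnorm e]
      exact norm_le_lorentzDualNorm hw (hb e) (hratio e) i
  have hgraph : IsClosed (S0.graph : Set (E × lp (fun _ : ℕ => 𝕜) (ENNReal.ofReal r))) := by
    have heq : (S0.graph : Set (E × lp (fun _ : ℕ => 𝕜) (ENNReal.ofReal r)))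
        = ⋂ i : ℕ, {p : E × lp (fun _ : ℕ => 𝕜) (ENNReal.ofReal r) |
            (p.2 : ∀ _ : ℕ, 𝕜) i = toSeq p.1 i} := by
      ext ⟨a, g⟩
      simp only [SetLike.mem_coe, LinearMap.mem_graph_iff, Set.mem_iInter, Set.mem_setOf_eq]
      constructor
      · rintro rfl i
        rfl
      · intro h
        exact lp.ext (funext h)
    rw [heq]
    exact isClosed_iInter fun i =>
      isClosed_eq ((continuous_lp_apply hpr0 i).comp continuous_snd)
        ((hcoordE i).comp continuous_fst)
  exact ⟨⟨S0, S0.continuous_of_isClosed_graph hgraph⟩, hS0⟩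

end Inclusions

/-- The boundedness of the canonical inclusions (1.4): if `w` is an admissible sequence with
`w ∈ ℓ_r` for some `1 < r < ∞` and `r*` is the conjugate exponent of `r`, then the canonical
inclusion `ℓ_{r*} ↪ d(w,1)` is bounded, and consequently so are the canonical inclusions
`d^*(w,1) ↪ ℓ_r` and `d_*(w,1) ↪ ℓ_r`. -/
theorem lorentz_canonical_inclusions
    {𝕜 : Type*} [RCLike 𝕜] (w : ℕ → ℝ) (hw : IsAdmissible w)
    (r s : ℝ) (hrs : Real.HolderConjugate r s)
    [Fact (1 ≤ ENNReal.ofReal r)] [Fact (1 ≤ ENNReal.ofReal s)]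
    (hwr : Summable fun i => w i ^ r)
    (D : Type*) [NormedAddCommGroup D] [NormedSpace 𝕜 D] [CompleteSpace D]
    (toSeqD : D →ₗ[𝕜] (ℕ → 𝕜)) (hD : IsLorentzSpace 𝕜 w D toSeqD)
    (Dd : Type*) [NormedAddCommGroup Dd] [NormedSpace 𝕜 Dd] [CompleteSpace Dd]
    (toSeqDd : Dd →ₗ[𝕜] (ℕ → 𝕜)) (hDd : IsLorentzDual 𝕜 w Dd toSeqDd)
    (Dp : Type*) [NormedAddCommGroup Dp] [NormedSpace 𝕜 Dp] [CompleteSpace Dp]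
    (toSeqDp : Dp →ₗ[𝕜] (ℕ → 𝕜)) (hDp : IsLorentzPredual 𝕜 w Dp toSeqDp) :
    (∃ T : lp (fun _ : ℕ => 𝕜) (ENNReal.ofReal s) →L[𝕜] D,
      ∀ f, toSeqD (T f) = (f : ∀ _ : ℕ, 𝕜)) ∧
    (∃ S : Dd →L[𝕜] lp (fun _ : ℕ => 𝕜) (ENNReal.ofReal r),
      ∀ e, ((S e : lp (fun _ : ℕ => 𝕜) (ENNReal.ofReal r)) : ∀ _ : ℕ, 𝕜) = toSeqDd e) ∧
    (∃ S' : Dp →L[𝕜] lp (fun _ : ℕ => 𝕜) (ENNReal.ofReal r),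
      ∀ e, ((S' e : lp (fun _ : ℕ => 𝕜) (ENNReal.ofReal r)) : ∀ _ : ℕ, 𝕜) = toSeqDp e) := by
  have hps0 : (ENNReal.ofReal s) ≠ 0 :=
    (lt_of_lt_of_le zero_lt_one (Fact.out : 1 ≤ ENNReal.ofReal s)).ne'
  refine ⟨?_, ?_, ?_⟩
  · have memD : ∀ f : lp (fun _ : ℕ => 𝕜) (ENNReal.ofReal s), ∃ e : D, toSeqD e = ⇑f := fun f =>
      (hD.mem_range ⇑f).mpr (memLorentzSpace_of_memℓp hw hrs hwr (lp.memℓp f))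
    let T0 : lp (fun _ : ℕ => 𝕜) (ENNReal.ofReal s) →ₗ[𝕜] D :=
      { toFun := fun f => (memD f).choose
        map_add' := fun f g => hD.inj (by
          rw [map_add, (memD f).choose_spec, (memD g).choose_spec, (memD (f + g)).choose_spec,
            lp.coeFn_add])
        map_smul' := fun c f => hD.inj (by
          rw [RingHom.id_apply, map_smul, (memD f).choose_spec, (memD (c • f)).choose_spec,
            lp.coeFn_smul]) }
    have hT0 : ∀ f, toSeqD (T0 f) = ⇑f := fun f => (memD f).choose_spec
    have hcoordD : ∀ i, Continuous fun e : D => toSeqD e i := fun i =>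
      continuous_coord_of_norm_bound toSeqD i fun e => by
        rw [hD.norm_eq e]
        exact norm_le_lorentzSumNorm hw ((hD.mem_range (toSeqD e)).mp ⟨e, rfl⟩) i
    have hgraph : IsClosed (T0.graph : Set (lp (fun _ : ℕ => 𝕜) (ENNReal.ofReal s) × D)) := by
      have heq : (T0.graph : Set (lp (fun _ : ℕ => 𝕜) (ENNReal.ofReal s) × D))
          = ⋂ i : ℕ, {p : lp (fun _ : ℕ => 𝕜) (ENNReal.ofReal s) × D |
              toSeqD p.2 i = (p.1 : ∀ _ : ℕ, 𝕜) i} := by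
        ext ⟨f, e⟩
        simp only [SetLike.mem_coe, LinearMap.mem_graph_iff, Set.mem_iInter, Set.mem_setOf_eq]
        constructor
        · rintro rfl i
          rw [hT0]
        · intro h
          refine hD.inj ?_
          rw [hT0]
          exact funext h
      rw [heq]
      exact isClosed_iInter fun i =>
        isClosed_eq ((hcoordD i).comp continuous_snd)
          ((continuous_lp_apply hps0 i).comp continuous_fst)
    exact ⟨⟨T0, T0.continuous_of_isClosed_graph hgraph⟩, hT0⟩
  · exact exists_inclusion_to_lp hw hrs hwr toSeqDd
      (fun e => ((hDd.mem_range (toSeqDd e)).mp ⟨e, rfl⟩).1)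
      (fun e => ((hDd.mem_range (toSeqDd e)).mp ⟨e, rfl⟩).2)
      hDd.norm_eq
  · exact exists_inclusion_to_lp hw hrs hwr toSeqDp
      (fun e => ((hDp.mem_range (toSeqDp e)).mp ⟨e, rfl⟩).1)
      (fun e => ((hDp.mem_range (toSeqDp e)).mp ⟨e, rfl⟩).2.bddAbove_range)
      hDp.norm_eq
end

section
/- Let w be an admissible sequence. Let z ∈ B_{d^*(w,1)} and suppose there exists x ∈ d_*(w,1) with ‖z − x‖_W < 1/2. Then there exist δ > 0 and n_0 ∈ ℕ such that ‖z + λ e_n‖_W ≤ 1 for every scalar λ with |λ| ≤ δ and every n ≥ n_0. -/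
noncomputable section

section Lorentz

open Filter Topology

variable {𝕜 : Type*} [RCLike 𝕜]

variable (𝕜)

namespace LorentzAux

variable {𝕜}

def dset (x : ℕ → 𝕜) (n : ℕ) : Set ℝ :=
  {r : ℝ | 0 ≤ r ∧ {i : ℕ | r < ‖x i‖}.Finite ∧ {i : ℕ | r < ‖x i‖}.ncard ≤ n}

lemma decRearr_def (x : ℕ → 𝕜) (n : ℕ) : decRearr x n = sInf (dset x n) := rfl

lemma dset_bddBelow (x : ℕ → 𝕜) (n : ℕ) : BddBelow (dset x n) :=
  ⟨0, fun _ hr => hr.1⟩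

lemma dset_nonempty {x : ℕ → 𝕜} (hx : BddAbove (Set.range fun i => ‖x i‖)) (n : ℕ) :
    (dset x n).Nonempty := by
  obtain ⟨M, hM⟩ := hx
  have hempty : {i : ℕ | max M 0 < ‖x i‖} = ∅ := by
    ext i
    simp only [Set.mem_setOf_eq, Set.mem_empty_iff_false, iff_false, not_lt]
    exact le_trans (hM (Set.mem_range_self i)) (le_max_left _ _)
  exact ⟨max M 0, le_max_right _ _, by rw [hempty]; exact Set.finite_empty,
    by rw [hempty]; simp⟩

lemma decRearr_nonneg (x : ℕ → 𝕜) (n : ℕ) : 0 ≤ decRearr x n :=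
  Real.sInf_nonneg fun _ hr => hr.1

/-- Partial sums of the decreasing rearrangement. -/
def Sm (x : ℕ → 𝕜) (k : ℕ) : ℝ := ∑ i ∈ Finset.range k, decRearr x i

lemma Sm_succ (x : ℕ → 𝕜) (k : ℕ) : Sm x (k + 1) = Sm x k + decRearr x k :=
  Finset.sum_range_succ _ _

lemma Sm_mono (x : ℕ → 𝕜) : Monotone (Sm x) := fun _ _ h =>
  Finset.sum_le_sum_of_subset_of_nonneg (Finset.range_subset_range.mpr h)
    (fun i _ _ => decRearr_nonneg x i)

lemma sum_norm_le_Sm {x : ℕ → 𝕜} (hx : BddAbove (Set.range fun i => ‖x i‖)) :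
    ∀ (n : ℕ) (F : Finset ℕ), F.card = n → ∑ i ∈ F, ‖x i‖ ≤ Sm x n := by
  intro n
  induction n with
  | zero =>
    intro F hF
    rw [Finset.card_eq_zero] at hF
    subst hF
    simp [Sm]
  | succ k ih =>
    intro F hF
    have hFne : F.Nonempty := by rw [← Finset.card_pos, hF]; omega
    obtain ⟨i₀, hi₀F, hi₀min⟩ := F.exists_min_image (fun i => ‖x i‖) hFne
    have key : ‖x i₀‖ ≤ decRearr x k := by
      refine le_csInf (dset_nonempty hx k) ?_
      intro r hr
      by_contra hlt
      push_neg at hlt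
      have hsub : (↑F : Set ℕ) ⊆ {i : ℕ | r < ‖x i‖} := fun i hi =>
        lt_of_lt_of_le hlt (hi₀min i (Finset.mem_coe.mp hi))
      have hcard := Set.ncard_le_ncard hsub hr.2.1
      rw [Set.ncard_coe_finset, hF] at hcard
      have := hr.2.2
      omega
    have hsum : ∑ i ∈ F.erase i₀, ‖x i‖ + ‖x i₀‖ = ∑ i ∈ F, ‖x i‖ :=
      Finset.sum_erase_add _ _ hi₀F
    have hcard' : (F.erase i₀).card = k := by
      rw [Finset.card_erase_of_mem hi₀F, hF]; omega
    have := ih (F.erase i₀) hcard'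
    rw [Sm_succ]
    linarith
lemma sum_norm_le_Sm' {x : ℕ → 𝕜} (hx : BddAbove (Set.range fun i => ‖x i‖))
    {k : ℕ} {F : Finset ℕ} (hF : F.card ≤ k) : ∑ i ∈ F, ‖x i‖ ≤ Sm x k :=
  le_trans (sum_norm_le_Sm hx F.card F rfl) (Sm_mono x hF)

lemma exists_finset_Sm_le (x : ℕ → 𝕜) (k : ℕ) :
    ∀ ε : ℝ, 0 < ε → ∃ F : Finset ℕ, F.card ≤ k ∧ Sm x k ≤ ∑ i ∈ F, ‖x i‖ + ε := by
  induction k with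
  | zero =>
    intro ε hε
    refine ⟨∅, le_rfl, ?_⟩
    simp [Sm]
    linarith
  | succ k ih =>
    intro ε hε
    obtain ⟨F, hFc, hF⟩ := ih (ε / 2) (by linarith)
    by_cases hd : decRearr x k ≤ ε / 2
    · refine ⟨F, by omega, ?_⟩
      rw [Sm_succ]
      linarith
    · push_neg at hd
      have hr0 : 0 ≤ decRearr x k - ε / 2 := by linarith
      have hrlt : decRearr x k - ε / 2 < sInf (dset x k) := by
        rw [← decRearr_def]; linarith
      have hrnot : decRearr x k - ε / 2 ∉ dset x k :=
        notMem_of_lt_csInf hrlt (dset_bddBelow x k)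
      have hns : ¬ ({i : ℕ | decRearr x k - ε / 2 < ‖x i‖} ⊆ ↑F) := by
        intro hsub
        refine hrnot ⟨hr0, F.finite_toSet.subset hsub, ?_⟩
        calc {i : ℕ | decRearr x k - ε / 2 < ‖x i‖}.ncard
            ≤ (↑F : Set ℕ).ncard := Set.ncard_le_ncard hsub F.finite_toSet
          _ = F.card := Set.ncard_coe_finset F
          _ ≤ k := hFc
      obtain ⟨i₀, hi₀A, hi₀F⟩ := Set.not_subset.mp hns
      have hi₀F' : i₀ ∉ F := fun h => hi₀F (Finset.mem_coe.mpr h)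
      refine ⟨insert i₀ F, ?_, ?_⟩
      · calc (insert i₀ F).card ≤ F.card + 1 := Finset.card_insert_le _ _
          _ ≤ k + 1 := by omega
      · rw [Finset.sum_insert hi₀F', Sm_succ]
        have : decRearr x k - ε / 2 < ‖x i₀‖ := hi₀A
        linarith

lemma Sm_le_add {a b c : ℕ → 𝕜} (ha : BddAbove (Set.range fun i => ‖a i‖))
    (hb : BddAbove (Set.range fun i => ‖b i‖))
    (h : ∀ i, ‖c i‖ ≤ ‖a i‖ + ‖b i‖) (k : ℕ) : Sm c k ≤ Sm a k + Sm b k := by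
  refine le_of_forall_pos_le_add fun ε hε => ?_
  obtain ⟨F, hFc, hF⟩ := exists_finset_Sm_le c k ε hε
  have h1 : ∑ i ∈ F, ‖c i‖ ≤ ∑ i ∈ F, ‖a i‖ + ∑ i ∈ F, ‖b i‖ := by
    rw [← Finset.sum_add_distrib]
    exact Finset.sum_le_sum fun i _ => h i
  have h2 := sum_norm_le_Sm' ha hFc
  have h3 := sum_norm_le_Sm' hb hFc
  linarith

lemma Sm_update_le {z : ℕ → 𝕜} (hz : BddAbove (Set.range fun i => ‖z i‖))
    (n : ℕ) (lam : 𝕜) (k : ℕ) :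
    Sm (z + lam • (Pi.single n (1 : 𝕜) : ℕ → 𝕜)) (k + 1) ≤
      max (Sm z (k + 1)) (Sm z k + ‖z n‖ + ‖lam‖) := by
  set y := z + lam • (Pi.single n (1 : 𝕜) : ℕ → 𝕜) with hy
  have hyi : ∀ i, i ≠ n → y i = z i := by
    intro i hi
    simp [hy, Pi.single_eq_of_ne hi]
  have hyn : ‖y n‖ ≤ ‖z n‖ + ‖lam‖ := by
    have : y n = z n + lam := by simp [hy]
    rw [this]
    exact (norm_add_le _ _)
  refine le_of_forall_pos_le_add fun ε hε => ?_
  obtain ⟨F, hFc, hF⟩ := exists_finset_Sm_le y (k + 1) ε hε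
  by_cases hn : n ∈ F
  · have her : ∑ i ∈ F.erase n, ‖y i‖ = ∑ i ∈ F.erase n, ‖z i‖ :=
      Finset.sum_congr rfl fun i hi => by rw [hyi i (Finset.ne_of_mem_erase hi)]
    have h1 : ∑ i ∈ F.erase n, ‖y i‖ + ‖y n‖ = ∑ i ∈ F, ‖y i‖ :=
      Finset.sum_erase_add _ _ hn
    have hec : (F.erase n).card ≤ k := by
      have := Finset.card_erase_of_mem hn
      omega
    have h2 : ∑ i ∈ F.erase n, ‖z i‖ ≤ Sm z k := sum_norm_le_Sm' hz hec
    have : ∑ i ∈ F, ‖y i‖ ≤ Sm z k + ‖z n‖ + ‖lam‖ := by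
      rw [← h1, her]
      linarith
    have hm : Sm z k + ‖z n‖ + ‖lam‖ ≤ max (Sm z (k + 1)) (Sm z k + ‖z n‖ + ‖lam‖) :=
      le_max_right _ _
    linarith
  · have her : ∑ i ∈ F, ‖y i‖ = ∑ i ∈ F, ‖z i‖ :=
      Finset.sum_congr rfl fun i hi => by rw [hyi i (fun h => hn (h ▸ hi))]
    have h2 : ∑ i ∈ F, ‖z i‖ ≤ Sm z (k + 1) := sum_norm_le_Sm' hz hFc
    have hm : Sm z (k + 1) ≤ max (Sm z (k + 1)) (Sm z k + ‖z n‖ + ‖lam‖) := le_max_left _ _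
    linarith

end LorentzAux

end Lorentz

open LorentzAux Filter Topology

/-- Lemma 4.4: let `w` be an admissible sequence, `z` in the unit ball of `d^*(w,1)`, and
suppose there is `x ∈ d_*(w,1)` with `‖z − x‖_W < 1/2`.  Then `z` satisfies the extremal
condition (3.1): there are `δ > 0` and `n₀` with `‖z + λ eₙ‖_W ≤ 1` for all `|λ| ≤ δ` and
`n ≥ n₀`. -/
theorem lorentz_dual_extremal_condition
    {𝕜 : Type*} [RCLike 𝕜] (w : ℕ → ℝ) (hw : IsAdmissible w)
    (z : ℕ → 𝕜) (hz : MemLorentzDual w z) (hz1 : lorentzDualNorm w z ≤ 1)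
    (x : ℕ → 𝕜) (hx : MemLorentzPredual w x)
    (hzx : lorentzDualNorm w (z - x) < 1 / 2) :
    ∃ (δ : ℝ) (n₀ : ℕ), 0 < δ ∧
      ∀ lam : 𝕜, ‖lam‖ ≤ δ → ∀ n, n₀ ≤ n →
        lorentzDualNorm w (z + lam • (Pi.single n (1 : 𝕜) : ℕ → 𝕜)) ≤ 1 := by
  classical
  obtain ⟨w0, wnn, wanti, wlim, wns⟩ := hw
  obtain ⟨hzb, hzr⟩ := hz
  obtain ⟨hxb, hxr⟩ := hx
  -- positivity of w
  have wpos : ∀ k, 0 < w k := by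
    intro k
    rcases (wnn k).lt_or_eq with h | h
    · exact h
    · exfalso
      apply wns
      apply summable_of_ne_finset_zero (s := Finset.range (k + 1))
      intro i hi
      have hki : k ≤ i := by
        simp only [Finset.mem_range, not_lt] at hi
        omega
      have h1 := wanti hki
      have h2 := wnn i
      linarith
  -- W facts
  have Wsucc : ∀ k, lorentzW w (k + 1) = lorentzW w k + w k := fun k =>
    Finset.sum_range_succ _ _
  have Wone : ∀ k, (1 : ℝ) ≤ lorentzW w (k + 1) := by
    intro k
    have : w 0 ≤ ∑ i ∈ Finset.range (k + 1), w i :=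
      Finset.single_le_sum (fun i _ => wnn i) (Finset.mem_range.mpr (by omega))
    rw [w0] at this
    exact this
  have Wpos : ∀ k, (0 : ℝ) < lorentzW w (k + 1) := fun k => lt_of_lt_of_le one_pos (Wone k)
  -- ratio formula
  have hratio : ∀ (v : ℕ → 𝕜) (k : ℕ),
      lorentzRatio w v k = Sm v (k + 1) / lorentzW w (k + 1) := fun v k => rfl
  -- S z bounds
  have hSz : ∀ k, Sm z (k + 1) ≤ lorentzW w (k + 1) := by
    intro k
    have h1 : lorentzRatio w z k ≤ lorentzDualNorm w z := le_ciSup hzr k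
    have h2 : lorentzRatio w z k ≤ 1 := le_trans h1 hz1
    rw [hratio, div_le_one (Wpos k)] at h2
    exact h2
  have hSz' : ∀ k, Sm z k ≤ lorentzW w k := by
    intro k
    cases k with
    | zero => simp [Sm, lorentzW]
    | succ m => exact hSz m
  -- boundedness of z - x
  obtain ⟨Mz, hMz⟩ := id hzb
  obtain ⟨Mx, hMx⟩ := id hxb
  have hzxb : BddAbove (Set.range fun i => ‖(z - x) i‖) := by
    refine ⟨Mz + Mx, ?_⟩
    rintro r ⟨i, rfl⟩
    calc ‖(z - x) i‖ ≤ ‖z i‖ + ‖x i‖ := norm_sub_le _ _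
      _ ≤ Mz + Mx := add_le_add (hMz (Set.mem_range_self i)) (hMx (Set.mem_range_self i))
  -- sup bound for ratio of x
  have hxrb : BddAbove (Set.range (lorentzRatio w x)) := hxr.bddAbove_range
  obtain ⟨Cx, hCx⟩ := hxrb
  obtain ⟨Cz, hCz⟩ := id hzr
  -- ratio of z - x is bounded
  have hzxrb : BddAbove (Set.range (lorentzRatio w (z - x))) := by
    refine ⟨Cz + Cx, ?_⟩
    rintro r ⟨k, rfl⟩
    have h1 : Sm (z - x) (k + 1) ≤ Sm z (k + 1) + Sm x (k + 1) :=
      Sm_le_add hzb hxb (fun i => norm_sub_le _ _) (k + 1)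
    have h2 : Sm z (k + 1) ≤ Cz * lorentzW w (k + 1) := by
      have := hCz (Set.mem_range_self k)
      rw [hratio, div_le_iff₀ (Wpos k)] at this
      exact this
    have h3 : Sm x (k + 1) ≤ Cx * lorentzW w (k + 1) := by
      have := hCx (Set.mem_range_self k)
      rw [hratio, div_le_iff₀ (Wpos k)] at this
      exact this
    rw [hratio, div_le_iff₀ (Wpos k)]
    nlinarith [Wpos k]
  -- α bound
  set α := lorentzDualNorm w (z - x) with hα
  have hα2 : α < 1 / 2 := hzx
  have hSzx : ∀ k, Sm (z - x) (k + 1) ≤ α * lorentzW w (k + 1) := by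
    intro k
    have h1 : lorentzRatio w (z - x) k ≤ α := le_ciSup hzxrb k
    rw [hratio, div_le_iff₀ (Wpos k)] at h1
    exact h1
  -- choose k₀ with ratio x ≤ 1/8 beyond
  have hev : ∀ᶠ k in atTop, lorentzRatio w x k < 1 / 8 :=
    hxr.eventually_lt_const (by norm_num)
  obtain ⟨k₀, hk₀⟩ := eventually_atTop.mp hev
  -- large k bound on Sm z
  have hlarge : ∀ k, k₀ ≤ k → Sm z (k + 1) ≤ (5 / 8) * lorentzW w (k + 1) := by
    intro k hk
    have h1 : Sm z (k + 1) ≤ Sm (z - x) (k + 1) + Sm x (k + 1) := by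
      refine Sm_le_add hzxb hxb (fun i => ?_) (k + 1)
      have : z i = (z - x) i + x i := by simp
      rw [this]
      exact norm_add_le _ _
    have h2 := hSzx k
    have h3 : Sm x (k + 1) ≤ (1 / 8) * lorentzW w (k + 1) := by
      have := (hk₀ k hk).le
      rw [hratio, div_le_iff₀ (Wpos k)] at this
      linarith
    have hW : (0 : ℝ) ≤ lorentzW w (k + 1) := (Wpos k).le
    nlinarith
  -- the constant c
  set c := min (w k₀) (3 / 8 : ℝ) with hcdef
  have hc : 0 < c := lt_min (wpos k₀) (by norm_num)
  have hc38 : c ≤ 3 / 8 := min_le_right _ _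
  -- finiteness of big coordinates of z
  have hfin : {i : ℕ | c / 2 < ‖z i‖}.Finite := by
    by_contra hinf
    have hinf2 : {i : ℕ | c / 2 < ‖z i‖}.Infinite := hinf
    have hces : Tendsto (fun k : ℕ => (k : ℝ)⁻¹ * lorentzW w k) atTop (𝓝 0) := wlim.cesaro
    have hev2 : ∀ᶠ k : ℕ in atTop, (k : ℝ)⁻¹ * lorentzW w k < c / 2 :=
      hces.eventually_lt_const (by linarith)
    obtain ⟨k₁, hk₁⟩ := eventually_atTop.mp hev2
    set k := k₁ + 1 with hk
    have hksmall := hk₁ k (by omega)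
    obtain ⟨F, hFsub, hFcard⟩ := hinf2.exists_subset_card_eq k
    have hlow : (F.card : ℝ) * (c / 2) ≤ ∑ i ∈ F, ‖z i‖ := by
      calc (F.card : ℝ) * (c / 2) = ∑ _i ∈ F, (c / 2) := by
            rw [Finset.sum_const, nsmul_eq_mul]
        _ ≤ ∑ i ∈ F, ‖z i‖ := Finset.sum_le_sum fun i hi => (hFsub hi).le
    have hup : ∑ i ∈ F, ‖z i‖ ≤ lorentzW w k := by
      refine le_trans (sum_norm_le_Sm hzb F.card F rfl) ?_
      rw [hFcard]
      exact hSz' k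
    have hkpos : (0 : ℝ) < (k : ℝ) := by positivity
    rw [hFcard] at hlow
    have : lorentzW w k < (c / 2) * k := by
      rw [inv_mul_lt_iff₀ hkpos] at hksmall
      linarith
    nlinarith
  -- choose n₀
  obtain ⟨N, hN⟩ := hfin.bddAbove
  refine ⟨c / 4, N + 1, by positivity, ?_⟩
  intro lam hlam n hn
  have hzn : ‖z n‖ ≤ c / 2 := by
    by_contra hcon
    push_neg at hcon
    have : n ≤ N := hN hcon
    omega
  have hznl : ‖z n‖ + ‖lam‖ ≤ (3 / 4) * c := by linarith
  -- final sup bound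
  refine ciSup_le fun k => ?_
  rw [hratio, div_le_one (Wpos k)]
  refine le_trans (Sm_update_le hzb n lam k) (max_le (hSz k) ?_)
  rcases le_or_gt k k₀ with hk | hk
  · have h1 : Sm z k ≤ lorentzW w k := hSz' k
    have h2 : c ≤ w k := le_trans (min_le_left _ _) (wanti hk)
    rw [Wsucc]
    linarith
  · have h1 : Sm z k ≤ Sm z (k + 1) := Sm_mono z (by omega)
    have h2 := hlarge k hk.le
    have h3 : (3 / 8 : ℝ) ≤ (3 / 8) * lorentzW w (k + 1) := by
      have := Wone k
      nlinarith
    linarith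

end
end
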